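/- For t > 0 and real β > -1, α > -1, the integral ∫₀^∞ t^(u+α) u^β / Γ(u+α+1) du converges (so the Volterra function μ(t,β,α) is well defined). -/

import Mathlib

open MeasureTheory Set

/-- Lower bound for the Gamma function: for any `M ≥ 1` and `x ≥ 1`,
`Γ(x) ≥ exp(-(M+1)) * M^(x-1)`. -/
lemma gamma_lower_aux (M x : ℝ) (hM : 1 ≤ M) (hx : 1 ≤ x) :
    Real.exp (-(M + 1)) * M ^ (x - 1) ≤ Real.Gamma x := by
  have hM0 : (0 : ℝ) < M := lt_of_lt_of_le one_pos hM
  have hx0 : (0 : ℝ) < x := lt_of_lt_of_le one_pos hx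
  rw [Real.Gamma_eq_integral hx0]
  have hint : IntegrableOn (fun s : ℝ => Real.exp (-s) * s ^ (x - 1)) (Ioi 0) :=
    Real.GammaIntegral_convergent hx0
  have hsub : Ioc M (M + 1) ⊆ Ioi (0 : ℝ) := fun s hs => lt_trans hM0 hs.1
  have h1 : Real.exp (-(M + 1)) * M ^ (x - 1)
      = ∫ _ in Ioc M (M + 1), Real.exp (-(M + 1)) * M ^ (x - 1) := by
    rw [setIntegral_const, Real.volume_real_Ioc]
    simp
  rw [h1]
  have step1 : (∫ _ in Ioc M (M + 1), Real.exp (-(M + 1)) * M ^ (x - 1))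
      ≤ ∫ s in Ioc M (M + 1), Real.exp (-s) * s ^ (x - 1) := by
    apply setIntegral_mono_on
    · exact integrableOn_const (by rw [Real.volume_Ioc]; exact ENNReal.ofReal_ne_top)
    · exact hint.mono_set hsub
    · exact measurableSet_Ioc
    · intro s hs
      have hs1 : M ≤ s := hs.1.le
      have hs2 : s ≤ M + 1 := hs.2
      have := Real.rpow_le_rpow hM0.le hs1 (sub_nonneg.2 hx)
      have hexp : Real.exp (-(M + 1)) ≤ Real.exp (-s) :=
        Real.exp_le_exp.2 (neg_le_neg hs2)
      exact mul_le_mul hexp this (Real.rpow_nonneg hM0.le _) (Real.exp_pos _).le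
  refine step1.trans (setIntegral_mono_set hint ?_ hsub.eventuallyLE)
  filter_upwards [ae_restrict_mem measurableSet_Ioi] with s hs
  exact mul_nonneg (Real.exp_pos _).le (Real.rpow_nonneg (le_of_lt hs) _)

/-- For `t > 0` and real `β > -1`, `α > -1`, the integral
`∫₀^∞ t^(u+α) u^β / Γ(u+α+1) du` converges, so the Volterra function
`μ(t,β,α)` is well defined. -/
theorem volterra_integrand_integrable (t β α : ℝ) (ht : 0 < t)
    (hβ : -1 < β) (hα : -1 < α) :
    IntegrableOn (fun u : ℝ => t ^ (u + α) * u ^ β / Real.Gamma (u + α + 1))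
      (Ioi 0) := by
  set f : ℝ → ℝ := fun u : ℝ => t ^ (u + α) * u ^ β / Real.Gamma (u + α + 1) with hf
  -- continuity of f on (0, ∞)
  have hGpos : ∀ u : ℝ, 0 ≤ u → 0 < Real.Gamma (u + α + 1) := fun u hu =>
    Real.Gamma_pos_of_pos (by linarith)
  have hcont : ContinuousOn f (Ioi 0) := by
    intro u hu
    have hu0 : (0 : ℝ) < u := hu
    apply ContinuousAt.continuousWithinAt
    apply ContinuousAt.div
    · apply ContinuousAt.mul
      · have : (fun u : ℝ => t ^ (u + α)) = fun u => Real.exp (Real.log t * (u + α)) :=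
          funext fun u => Real.rpow_def_of_pos ht _
        rw [this]
        exact (Real.continuous_exp.comp (by continuity)).continuousAt
      · exact Real.continuousAt_rpow_const u β (Or.inl hu0.ne')
    · have hne : ∀ m : ℕ, u + α + 1 ≠ -m := by
        intro m
        have h1 : (0:ℝ) < u + α + 1 := by linarith
        have h2 : -(m:ℝ) ≤ 0 := neg_nonpos.mpr (Nat.cast_nonneg m)
        exact (lt_of_le_of_lt h2 h1).ne'
      have hg : ContinuousAt Real.Gamma (u + α + 1) :=
        (Real.differentiableAt_Gamma hne).continuousAt
      exact ContinuousAt.comp (x := u) (f := fun u : ℝ => u + α + 1) hg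
          ((by continuity : Continuous fun u : ℝ => u + α + 1).continuousAt)
    · exact (hGpos u hu0.le).ne'
  -- part 1: integrability on Ioc 0 1
  have hpart1 : IntegrableOn f (Ioc 0 1) := by
    have hgc : ContinuousOn (fun u : ℝ => t ^ (u + α) / Real.Gamma (u + α + 1)) (Icc 0 1) := by
      intro u hu
      apply ContinuousAt.continuousWithinAt
      apply ContinuousAt.div
      · have : (fun u : ℝ => t ^ (u + α)) = fun u => Real.exp (Real.log t * (u + α)) :=
          funext fun u => Real.rpow_def_of_pos ht _
        rw [this]
        exact (Real.continuous_exp.comp (by continuity)).continuousAt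
      · have hne : ∀ m : ℕ, u + α + 1 ≠ -m := by
          intro m
          have h1 : (0:ℝ) < u + α + 1 := by have := hu.1; linarith
          have h2 : -(m:ℝ) ≤ 0 := neg_nonpos.mpr (Nat.cast_nonneg m)
          exact (lt_of_le_of_lt h2 h1).ne'
        have hg : ContinuousAt Real.Gamma (u + α + 1) :=
          (Real.differentiableAt_Gamma hne).continuousAt
        exact ContinuousAt.comp (x := u) (f := fun u : ℝ => u + α + 1) hg
          ((by continuity : Continuous fun u : ℝ => u + α + 1).continuousAt)
      · exact (hGpos u hu.1).ne'
    obtain ⟨C, hC⟩ := isCompact_Icc.exists_bound_of_continuousOn hgc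
    have hrint : IntegrableOn (fun u : ℝ => C * u ^ β) (Ioc 0 1) :=
      ((intervalIntegral.intervalIntegrable_rpow' hβ (a := 0) (b := 1)).1).const_mul C
    apply Integrable.mono hrint
    · exact (hcont.mono Ioc_subset_Ioi_self).aestronglyMeasurable measurableSet_Ioc
    · filter_upwards [ae_restrict_mem measurableSet_Ioc] with u hu
      have hu0 : (0 : ℝ) < u := hu.1
      have hub : u ^ β ≤ 1 ^ β ∨ True := Or.inr trivial
      have hfu : |f u| = (t ^ (u + α) / Real.Gamma (u + α + 1)) * u ^ β := by
        rw [hf]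
        have h1 : 0 ≤ t ^ (u + α) * u ^ β / Real.Gamma (u + α + 1) :=
          div_nonneg (mul_nonneg (Real.rpow_nonneg ht.le _) (Real.rpow_nonneg hu0.le _))
            (hGpos u hu0.le).le
        rw [abs_of_nonneg h1]; ring
      rw [Real.norm_eq_abs, Real.norm_eq_abs, hfu]
      have hbound : t ^ (u + α) / Real.Gamma (u + α + 1) ≤ |C| := by
        have := hC u ⟨hu0.le, hu.2⟩
        rw [Real.norm_eq_abs] at this
        calc t ^ (u + α) / Real.Gamma (u + α + 1)
            ≤ |t ^ (u + α) / Real.Gamma (u + α + 1)| := le_abs_self _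
          _ ≤ C := this
          _ ≤ |C| := le_abs_self C
      calc (t ^ (u + α) / Real.Gamma (u + α + 1)) * u ^ β
          ≤ |C| * u ^ β := by
            apply mul_le_mul_of_nonneg_right hbound (Real.rpow_nonneg hu0.le _)
        _ = |C| * |u ^ β| := by rw [abs_of_nonneg (Real.rpow_nonneg hu0.le _)]
        _ = |C * u ^ β| := (abs_mul _ _).symm
  -- part 2: integrability on Ioi 1
  have hpart2 : IntegrableOn f (Ioi 1) := by
    apply integrable_of_isBigO_exp_neg (f := f) (a := 1) (b := 1) one_pos
      (hcont.mono (fun x (hx : x ∈ Ici 1) => (lt_of_lt_of_le one_pos hx : (0:ℝ) < x)))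
    rw [Asymptotics.isBigO_iff]
    set M : ℝ := max 1 (t * Real.exp 2) with hM
    have hM1 : (1 : ℝ) ≤ M := le_max_left _ _
    have hM0 : (0 : ℝ) < M := lt_of_lt_of_le one_pos hM1
    have htM : t / M ≤ Real.exp (-2) := by
      rcases le_or_gt (t * Real.exp 2) 1 with h | h
      · have hM1' : M = 1 := by
          rw [hM, max_eq_left h]
        rw [hM1', div_one]
        have : t ≤ Real.exp (-2) := by
          rw [Real.exp_neg]
          rw [← le_div_iff₀ (Real.exp_pos 2)] at h
          simpa [div_eq_mul_inv] using h
        exact this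
      · have hM2 : M = t * Real.exp 2 := by
          rw [hM, max_eq_right h.le]
        rw [hM2, div_mul_eq_div_div]
        rw [div_self ht.ne', Real.exp_neg]
        rw [one_div]
    use Real.exp (M + 1 - 2 * α)
    have hub : ∀ᶠ u : ℝ in Filter.atTop, u ^ β ≤ Real.exp u := by
      have h0 := tendsto_rpow_mul_exp_neg_mul_atTop_nhds_zero β 1 one_pos
      filter_upwards [h0.eventually (eventually_le_nhds one_pos),
        Filter.eventually_gt_atTop (0:ℝ)] with u h1 h2
      have he : (0:ℝ) < Real.exp (-1 * u) := Real.exp_pos _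
      rw [← le_div_iff₀ he] at h1
      calc u ^ β ≤ 1 / Real.exp (-1 * u) := h1
        _ = Real.exp u := by rw [neg_one_mul, Real.exp_neg, one_div, inv_inv]
    filter_upwards [hub, Filter.eventually_ge_atTop (1:ℝ),
      Filter.eventually_ge_atTop (-α)] with u hu1 hu2 hu3
    have hu0 : (0:ℝ) < u := lt_of_lt_of_le one_pos hu2
    have hx0 : (0:ℝ) ≤ u + α := by linarith
    -- Gamma lower bound
    have hΓ : Real.exp (-(M + 1)) * M ^ (u + α) ≤ Real.Gamma (u + α + 1) := by
      have := gamma_lower_aux M (u + α + 1) hM1 (by linarith)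
      rwa [show u + α + 1 - 1 = u + α by ring] at this
    have hnum : 0 ≤ t ^ (u + α) * u ^ β :=
      mul_nonneg (Real.rpow_nonneg ht.le _) (Real.rpow_nonneg hu0.le _)
    have hden : (0:ℝ) < Real.exp (-(M + 1)) * M ^ (u + α) :=
      mul_pos (Real.exp_pos _) (Real.rpow_pos_of_pos hM0 _)
    have step1 : f u ≤ t ^ (u + α) * u ^ β / (Real.exp (-(M + 1)) * M ^ (u + α)) := by
      rw [hf]
      exact div_le_div_of_nonneg_left hnum hden hΓ
    have step2 : t ^ (u + α) * u ^ β / (Real.exp (-(M + 1)) * M ^ (u + α))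
        = Real.exp (M + 1) * ((t / M) ^ (u + α) * u ^ β) := by
      rw [Real.div_rpow ht.le hM0.le, Real.exp_neg]
      field_simp
    have step3 : (t / M) ^ (u + α) ≤ Real.exp (-2 * (u + α)) := by
      calc (t / M) ^ (u + α) ≤ (Real.exp (-2)) ^ (u + α) :=
            Real.rpow_le_rpow (div_nonneg ht.le hM0.le) htM hx0
        _ = Real.exp (-2 * (u + α)) := by rw [← Real.exp_mul]
    have step4 : f u ≤ Real.exp (M + 1) * (Real.exp (-2 * (u + α)) * Real.exp u) := by
      refine step1.trans ?_
      rw [step2]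
      apply mul_le_mul_of_nonneg_left _ (Real.exp_pos _).le
      exact mul_le_mul step3 hu1 (Real.rpow_nonneg hu0.le _) (Real.exp_pos _).le
    have heq : Real.exp (M + 1) * (Real.exp (-2 * (u + α)) * Real.exp u)
        = Real.exp (M + 1 - 2 * α) * Real.exp (-u) := by
      rw [← Real.exp_add, ← Real.exp_add, ← Real.exp_add]
      ring_nf
    have hf0 : 0 ≤ f u := by
      rw [hf]
      exact div_nonneg hnum (hGpos u hu0.le).le
    rw [Real.norm_eq_abs, abs_of_nonneg hf0, Real.norm_eq_abs, neg_one_mul,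
      abs_of_nonneg (Real.exp_pos _).le]
    calc f u ≤ Real.exp (M + 1 - 2 * α) * Real.exp (-u) := by rw [← heq]; exact step4
      _ = Real.exp (M + 1 - 2 * α) * Real.exp (-u) := rfl
  rw [show Ioi (0:ℝ) = Ioc 0 1 ∪ Ioi 1 from (Ioc_union_Ioi_eq_Ioi zero_le_one).symm]
  exact hpart1.union hpart2
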